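/- Let E be a finite-dimensional real normed vector space, X1, X2, X0 : E → E C^∞ vector fields and c¹, c² : E → ℝ C^∞ functions such that [X2, X1] = c¹·X1 + c²·X2 + X0 pointwise. Let δ : E → ℝ be C^∞ with (X1δ)² + (X2δ)² = 1 everywhere. Set N = (X1δ)·X1 + (X2δ)·X2, JN = (X1δ)·X2 − (X2δ)·X1, and H = −X1(X1δ) − X2(X2δ) − c²·(X1δ) + c¹·(X2δ). Then, as an identity of vector fields on E, [JN, N] = −H·JN − (X0δ)·N + X0. -/

import Mathlib

/-- The Lie bracket of two vector fields on a normed vector space: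
`[X, Y](p) = DY(p)(X(p)) − DX(p)(Y(p))`. -/
noncomputable def vlie {E : Type*} [NormedAddCommGroup E] [NormedSpace ℝ E]
    (X Y : E → E) : E → E :=
  fun p => fderiv ℝ Y p (X p) - fderiv ℝ X p (Y p)

/-- Lemma 5.2 of the paper: if `[X2, X1] = c¹·X1 + c²·X2 + X0` and
`δ` satisfies the eikonal equation `(X1δ)² + (X2δ)² = 1`, then with
`N = (X1δ)X1 + (X2δ)X2`, `JN = (X1δ)X2 − (X2δ)X1` and
`H = −X1X1δ − X2X2δ − c²(X1δ) + c¹(X2δ)` one has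
`[JN, N] = −H·JN − (X0δ)·N + X0`. -/
theorem bracket_JN_N
    {E : Type*} [NormedAddCommGroup E] [NormedSpace ℝ E] [FiniteDimensional ℝ E]
    (X1 X2 X0 : E → E) (c1 c2 : E → ℝ) (δ : E → ℝ)
    (hX1 : ContDiff ℝ (⊤ : ℕ∞) X1) (hX2 : ContDiff ℝ (⊤ : ℕ∞) X2)
    (hX0 : ContDiff ℝ (⊤ : ℕ∞) X0)
    (hc1 : ContDiff ℝ (⊤ : ℕ∞) c1) (hc2 : ContDiff ℝ (⊤ : ℕ∞) c2)
    (hδ : ContDiff ℝ (⊤ : ℕ∞) δ)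
    (hbr : ∀ p, vlie X2 X1 p = c1 p • X1 p + c2 p • X2 p + X0 p)
    (heik : ∀ p, (fderiv ℝ δ p (X1 p)) ^ 2 + (fderiv ℝ δ p (X2 p)) ^ 2 = 1)
    (N JN : E → E) (H : E → ℝ)
    (hN : N = fun p => (fderiv ℝ δ p (X1 p)) • X1 p + (fderiv ℝ δ p (X2 p)) • X2 p)
    (hJN : JN = fun p => (fderiv ℝ δ p (X1 p)) • X2 p - (fderiv ℝ δ p (X2 p)) • X1 p)
    (hH : H = fun p =>
      -(fderiv ℝ (fun q => fderiv ℝ δ q (X1 q)) p (X1 p))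
        - fderiv ℝ (fun q => fderiv ℝ δ q (X2 q)) p (X2 p)
        - c2 p * fderiv ℝ δ p (X1 p) + c1 p * fderiv ℝ δ p (X2 p)) :
    ∀ p : E, vlie JN N p = -(H p) • JN p - (fderiv ℝ δ p (X0 p)) • N p + X0 p := by
  have hδ1 : Differentiable ℝ δ := hδ.differentiable (by simp)
  have hδ' : ContDiff ℝ (⊤ : ℕ∞) (fderiv ℝ δ) := (contDiff_infty_iff_fderiv.mp hδ).2
  have hδ'1 : Differentiable ℝ (fderiv ℝ δ) := hδ'.differentiable (by simp)
  have hX1d : Differentiable ℝ X1 := hX1.differentiable (by simp)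
  have hX2d : Differentiable ℝ X2 := hX2.differentiable (by simp)
  have hA : Differentiable ℝ (fun q => fderiv ℝ δ q (X1 q)) :=
    (hδ'.clm_apply hX1).differentiable (by simp)
  have hB : Differentiable ℝ (fun q => fderiv ℝ δ q (X2 q)) :=
    (hδ'.clm_apply hX2).differentiable (by simp)
  intro p
  -- first derivative formulas for a = X1δ, b = X2δ
  have hfA : ∀ v, fderiv ℝ (fun q => fderiv ℝ δ q (X1 q)) p v
      = fderiv ℝ (fderiv ℝ δ) p v (X1 p) + fderiv ℝ δ p (fderiv ℝ X1 p v) := by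
    intro v
    rw [fderiv_clm_apply (hδ'1 p) (hX1d p)]
    simp; abel
  have hfB : ∀ v, fderiv ℝ (fun q => fderiv ℝ δ q (X2 q)) p v
      = fderiv ℝ (fderiv ℝ δ) p v (X2 p) + fderiv ℝ δ p (fderiv ℝ X2 p v) := by
    intro v
    rw [fderiv_clm_apply (hδ'1 p) (hX2d p)]
    simp; abel
  -- symmetry of second derivative
  have hsymm : ∀ v w, fderiv ℝ (fderiv ℝ δ) p v w = fderiv ℝ (fderiv ℝ δ) p w v :=
    second_derivative_symmetric (fun y => (hδ1 y).hasFDerivAt) ((hδ'1 p).hasFDerivAt)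
  -- differentiated eikonal identity
  have heik' : ∀ v, fderiv ℝ δ p (X1 p) * fderiv ℝ (fun q => fderiv ℝ δ q (X1 q)) p v
      + fderiv ℝ δ p (X2 p) * fderiv ℝ (fun q => fderiv ℝ δ q (X2 q)) p v = 0 := by
    have h0 : (fun q => (fderiv ℝ δ q (X1 q)) * (fderiv ℝ δ q (X1 q))
        + (fderiv ℝ δ q (X2 q)) * (fderiv ℝ δ q (X2 q))) = fun _ => (1:ℝ) := by
      funext q
      rw [← heik q]; ring
    have hfs : fderiv ℝ (fun q => (fderiv ℝ δ q (X1 q)) * (fderiv ℝ δ q (X1 q))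
        + (fderiv ℝ δ q (X2 q)) * (fderiv ℝ δ q (X2 q))) p
        = (fderiv ℝ δ p (X1 p) • fderiv ℝ (fun q => fderiv ℝ δ q (X1 q)) p
            + fderiv ℝ δ p (X1 p) • fderiv ℝ (fun q => fderiv ℝ δ q (X1 q)) p)
          + (fderiv ℝ δ p (X2 p) • fderiv ℝ (fun q => fderiv ℝ δ q (X2 q)) p
            + fderiv ℝ δ p (X2 p) • fderiv ℝ (fun q => fderiv ℝ δ q (X2 q)) p) := by
      exact (((hA p).hasFDerivAt.mul (hA p).hasFDerivAt).add
        ((hB p).hasFDerivAt.mul (hB p).hasFDerivAt)).fderiv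
    rw [h0] at hfs
    intro v
    have := congrArg (fun L => L v) hfs
    simp only [fderiv_fun_const, Pi.zero_apply, ContinuousLinearMap.zero_apply,
      ContinuousLinearMap.add_apply, ContinuousLinearMap.smul_apply, smul_eq_mul] at this
    linarith
  -- the bracket hypothesis, solved for X0
  have hX0p : X0 p = fderiv ℝ X1 p (X2 p) - fderiv ℝ X2 p (X1 p)
      - c1 p • X1 p - c2 p • X2 p := by
    have := hbr p
    simp only [vlie] at this
    rw [this]; abel
  subst hN hJN hH
  simp only [vlie]
  -- derivative of N and JN
  have hNd : fderiv ℝ (fun q => (fderiv ℝ δ q (X1 q)) • X1 q + (fderiv ℝ δ q (X2 q)) • X2 q) p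
      = (fderiv ℝ δ p (X1 p) • fderiv ℝ X1 p
          + (fderiv ℝ (fun q => fderiv ℝ δ q (X1 q)) p).smulRight (X1 p))
        + (fderiv ℝ δ p (X2 p) • fderiv ℝ X2 p
          + (fderiv ℝ (fun q => fderiv ℝ δ q (X2 q)) p).smulRight (X2 p)) := by
    rw [fderiv_fun_add (f := fun q => (fderiv ℝ δ q (X1 q)) • X1 q)
      (g := fun q => (fderiv ℝ δ q (X2 q)) • X2 q) ((hA p).smul (hX1d p)) ((hB p).smul (hX2d p)),
      fderiv_fun_smul (hA p) (hX1d p), fderiv_fun_smul (hB p) (hX2d p)]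
  have hJNd : fderiv ℝ (fun q => (fderiv ℝ δ q (X1 q)) • X2 q - (fderiv ℝ δ q (X2 q)) • X1 q) p
      = (fderiv ℝ δ p (X1 p) • fderiv ℝ X2 p
          + (fderiv ℝ (fun q => fderiv ℝ δ q (X1 q)) p).smulRight (X2 p))
        - (fderiv ℝ δ p (X2 p) • fderiv ℝ X1 p
          + (fderiv ℝ (fun q => fderiv ℝ δ q (X2 q)) p).smulRight (X1 p)) := by
    rw [fderiv_fun_sub (f := fun q => (fderiv ℝ δ q (X1 q)) • X2 q)
      (g := fun q => (fderiv ℝ δ q (X2 q)) • X1 q) ((hA p).smul (hX2d p)) ((hB p).smul (hX1d p)),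
      fderiv_fun_smul (hA p) (hX2d p), fderiv_fun_smul (hB p) (hX1d p)]
  simp only [hNd, hJNd, hX0p, ContinuousLinearMap.add_apply, ContinuousLinearMap.sub_apply,
    ContinuousLinearMap.smul_apply, ContinuousLinearMap.smulRight_apply, map_add, map_sub,
    map_smul, smul_eq_mul, hfA, hfB]
  have S : fderiv ℝ (fderiv ℝ δ) p (X1 p) (X2 p) = fderiv ℝ (fderiv ℝ δ) p (X2 p) (X1 p) :=
    hsymm (X1 p) (X2 p)
  have E1 := heik' (X1 p)
  have E2 := heik' (X2 p)
  rw [hfA, hfB] at E1 E2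
  match_scalars
  · linear_combination heik p
  · linear_combination (fderiv ℝ δ p (X1 p)) * S + 2 * E2 - c1 p * heik p
  · ring
  · linear_combination (fderiv ℝ δ p (X2 p)) * S - 2 * E1 - c2 p * heik p
  · ring
  · linear_combination -heik p
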